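/- arXiv:2112.00382 — 2 statements merged into one kernel-verified Lean document; each statement's English description precedes it below -/
import Mathlib

section
/- The space S_k = { p ∈ (P̃_k)² : p(ξ,η)·(ξ,η) = 0 } equals P̃_{k-1} · (−η, ξ), i.e., every such p has the form q(ξ,η)·(−η, ξ) for some homogeneous polynomial q of degree k−1, and conversely. -/
open MvPolynomial

lemma degree_add_single (d : Fin 2 →₀ ℕ) (i : Fin 2) :
    Finsupp.degree (d + Finsupp.single i 1) = Finsupp.degree d + 1 := by
  have h : (Finsupp.weight (1 : Fin 2 → ℕ)) (Finsupp.single i 1) = 1 := by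
    simp [Finsupp.weight_apply, Finsupp.sum_single_index]
  simp [Finsupp.degree_eq_weight_one, map_add, h]
  exact h

lemma X_dvd_of_coeff (i : Fin 2) (p : MvPolynomial (Fin 2) ℝ)
    (h : ∀ d : Fin 2 →₀ ℕ, d i = 0 → coeff d p = 0) : X i ∣ p := by
  rw [X_dvd_iff_modMonomial_eq_zero]
  ext d
  rw [coeff_zero]
  by_cases hd : Finsupp.single i 1 ≤ d
  · exact coeff_modMonomial_of_le p hd
  · rw [coeff_modMonomial_of_not_le p hd]
    apply h
    rw [Finsupp.single_le_iff] at hd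
    omega

lemma factor_homogeneous {k : ℕ} (hk : 1 ≤ k) (i : Fin 2)
    (q p : MvPolynomial (Fin 2) ℝ) (hp : p.IsHomogeneous k) (hpq : p = q * X i) :
    q.IsHomogeneous (k - 1) := by
  intro d hd
  rw [show (1 : Fin 2 → ℕ) = fun _ => 1 from rfl, ← Finsupp.degree_eq_weight_one]
  by_contra hdeg
  apply hd
  have h1 : coeff d q = coeff (d + Finsupp.single i 1) (q * X i) := by
    rw [coeff_mul_X]
  rw [h1, ← hpq]
  apply hp.coeff_eq_zero
  rw [degree_add_single]
  omega

theorem Sk_eq_homogeneous_rotation (k : ℕ) (hk : 1 ≤ k)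
    (p₁ p₂ : MvPolynomial (Fin 2) ℝ)
    (h₁ : p₁ ∈ homogeneousSubmodule (Fin 2) ℝ k)
    (h₂ : p₂ ∈ homogeneousSubmodule (Fin 2) ℝ k) :
    p₁ * X 0 + p₂ * X 1 = 0 ↔
      ∃ q ∈ homogeneousSubmodule (Fin 2) ℝ (k - 1),
        p₁ = q * (-(X 1)) ∧ p₂ = q * X 0 := by
  constructor
  · intro h
    -- X 1 divides p₁
    have hdvd : X (1 : Fin 2) ∣ p₁ := by
      apply X_dvd_of_coeff
      intro d hd
      have h1 : coeff d p₁ = coeff (d + Finsupp.single (0 : Fin 2) 1) (p₁ * X 0) := by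
        rw [coeff_mul_X]
      have h2 : p₁ * X 0 = (-p₂) * X 1 := by
        rw [neg_mul]
        exact eq_neg_of_add_eq_zero_left h
      rw [h1, h2]
      classical
      rw [coeff_mul_X', if_neg]
      simp [Finsupp.mem_support_iff, Finsupp.add_apply, Finsupp.single_apply, hd]
    obtain ⟨q', hq'⟩ := hdvd
    refine ⟨-q', ?_, ?_, ?_⟩
    · rw [mem_homogeneousSubmodule]
      apply factor_homogeneous hk 1 (-q') (-p₁) (MvPolynomial.IsHomogeneous.neg h₁)
      rw [hq']; ring
    · rw [hq']; ring
    · have hX : (X (1 : Fin 2) : MvPolynomial (Fin 2) ℝ) ≠ 0 := X_ne_zero 1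
      have : (q' * X 0 + p₂) * X 1 = 0 := by
        rw [hq'] at h; linear_combination h
      rcases mul_eq_zero.mp this with h' | h'
      · linear_combination h'
      · exact absurd h' hX
  · rintro ⟨q, hq, rfl, rfl⟩
    ring
end

section
/- The eight second-order Nédélec shape functions v₁², …, v₈² on the reference triangle (edge functions v₁²–v₆² and inner functions v₇², v₈² as given) form a basis of the space (P₁)² ⊕ P̃₁·(−η, ξ), which has dimension 8. -/
open MvPolynomial

local notation "Mv" => MvPolynomial (Fin 2) ℝ

/-- The map `q ↦ q · (−η, ξ)`. -/
noncomputable def rotMul : Mv →ₗ[ℝ] Mv × Mv :=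
  LinearMap.prod (-(LinearMap.mulRight ℝ (X 1 : Mv))) (LinearMap.mulRight ℝ (X 0))

/-- The second-order triangular Nédélec space `(P₁)² ⊕ P̃₁·(−η, ξ)`. -/
noncomputable def NedelecTri2 : Submodule ℝ (Mv × Mv) :=
  ((restrictTotalDegree (Fin 2) ℝ 1).prod (restrictTotalDegree (Fin 2) ℝ 1)) ⊔
    Submodule.map rotMul (homogeneousSubmodule (Fin 2) ℝ 1)

/-- The eight second-order Nédélec shape functions on the reference triangle,
written as pairs of polynomials in `ξ = X 0`, `η = X 1`. -/
noncomputable def shapeNT2 (j : Fin 8) : Mv × Mv :=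
  match j with
  | 0 => (2 * (-(X 1) + 4 * X 1 * X 0), 2 * (2 * X 0 - 4 * X 0 ^ 2))
  | 1 => (2 * (-(2 : Mv) * X 1 + 4 * X 1 ^ 2), 2 * (X 0 - 4 * X 1 * X 0))
  | 2 => (2 * (-(2 : Mv) * X 1 + 4 * X 1 ^ 2),
          2 * (-(1 : Mv) + 3 * X 1 + X 0 - 4 * X 1 * X 0))
  | 3 => (2 * (3 * X 1 - 4 * X 1 ^ 2 - 4 * X 1 * X 0),
          2 * ((2 : Mv) - 3 * X 1 - 6 * X 0 + 4 * X 1 * X 0 + 4 * X 0 ^ 2))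
  | 4 => (2 * ((2 : Mv) - 6 * X 1 + 4 * X 1 ^ 2 - 3 * X 0 + 4 * X 1 * X 0),
          2 * (3 * X 0 - 4 * X 1 * X 0 - 4 * X 0 ^ 2))
  | 5 => (2 * (-(1 : Mv) + X 1 + 3 * X 0 - 4 * X 1 * X 0),
          2 * (-(2 : Mv) * X 0 + 4 * X 0 ^ 2))
  | 6 => (2 * (8 * X 1 - 8 * X 1 ^ 2 - 4 * X 1 * X 0),
          2 * (-(4 : Mv) * X 0 + 8 * X 1 * X 0 + 4 * X 0 ^ 2))
  | 7 => (2 * (-(4 : Mv) * X 1 + 4 * X 1 ^ 2 + 8 * X 1 * X 0),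
          2 * (8 * X 0 - 4 * X 1 * X 0 - 8 * X 0 ^ 2))

/-! ### Auxiliary lemmas -/

lemma NT2.mono_class (d : Fin 2 →₀ ℕ) (h : d 0 + d 1 ≤ 1) :
    d = 0 ∨ d = Finsupp.single 0 1 ∨ d = Finsupp.single 1 1 := by
  have h0 : d 0 = 0 ∨ d 0 = 1 := by omega
  rcases h0 with h0 | h0
  · rcases (show d 1 = 0 ∨ d 1 = 1 by omega) with h1 | h1
    · left; ext i; fin_cases i <;> simp [h0, h1]
    · right; right; ext i; fin_cases i <;> simp [h0, h1, Finsupp.single_apply]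
  · right; left
    have h1 : d 1 = 0 := by omega
    ext i; fin_cases i <;> simp [h0, h1, Finsupp.single_apply]

lemma NT2.dsum_eq (d : Fin 2 →₀ ℕ) : (d.sum fun _ e => e) = d 0 + d 1 := by
  rw [Finsupp.sum_fintype _ _ (fun _ => rfl)]
  simp [Fin.sum_univ_two]

lemma NT2.rtd_le : restrictTotalDegree (Fin 2) ℝ 1 ≤
    Submodule.span ℝ {(1 : Mv), X 0, X 1} := by
  intro p hp
  rw [mem_restrictTotalDegree] at hp
  rw [p.as_sum]
  refine Submodule.sum_mem _ fun d hd => ?_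
  have hdeg : d 0 + d 1 ≤ 1 := by
    have := le_totalDegree hd
    rw [NT2.dsum_eq] at this; omega
  have hm : (monomial d (coeff d p) : Mv) = coeff d p • monomial d 1 := by
    rw [smul_monomial, smul_eq_mul, mul_one]
  rw [hm]
  refine Submodule.smul_mem _ _ (Submodule.subset_span ?_)
  rcases NT2.mono_class d hdeg with h | h | h <;> subst h <;>
    simp [MvPolynomial.monomial_zero', X]

lemma NT2.homog_le : homogeneousSubmodule (Fin 2) ℝ 1 ≤
    Submodule.span ℝ {(X 0 : Mv), X 1} := by
  intro p hp
  rw [mem_homogeneousSubmodule] at hp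
  rw [p.as_sum]
  refine Submodule.sum_mem _ fun d hd => ?_
  have hc := hp (mem_support_iff.mp hd)
  rw [Finsupp.weight_apply, Finsupp.sum_fintype _ _ (fun _ => by simp)] at hc
  simp [Fin.sum_univ_two] at hc
  have hdeg : d 0 + d 1 = 1 := by simpa using hc
  have hm : (monomial d (coeff d p) : Mv) = coeff d p • monomial d 1 := by
    rw [smul_monomial, smul_eq_mul, mul_one]
  rw [hm]
  refine Submodule.smul_mem _ _ (Submodule.subset_span ?_)
  rcases NT2.mono_class d hdeg.le with h | h | h
  · exfalso; subst h; simp at hdeg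
  · subst h; simp [X]
  · subst h; simp [X]

lemma NT2.rotMul_apply (q : Mv) : rotMul q = (-(q * X 1), q * X 0) := rfl

lemma NT2.deg_lin (c₀ c₁ c₂ : ℝ) :
    ((C c₀ + C c₁ * X 0 + C c₂ * X 1 : Mv)).totalDegree ≤ 1 := by
  refine (totalDegree_add _ _).trans ?_
  refine max_le ((totalDegree_add _ _).trans (max_le ?_ ?_)) ?_
  · simp [totalDegree_C]
  · exact (totalDegree_mul _ _).trans (by simp [totalDegree_C, totalDegree_X])
  · exact (totalDegree_mul _ _).trans (by simp [totalDegree_C, totalDegree_X])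

lemma NT2.homog_lin (a b : ℝ) : (C a * X 0 + C b * X 1 : Mv) ∈
    homogeneousSubmodule (Fin 2) ℝ 1 := by
  refine Submodule.add_mem _ ?_ ?_ <;>
  · rw [← smul_eq_C_mul]
    exact Submodule.smul_mem _ _ (isHomogeneous_X ℝ _)

lemma NT2.mem_ned (c₀ c₁ c₂ d₀ d₁ d₂ a b : ℝ) (v : Mv × Mv)
    (hv : v = (C c₀ + C c₁ * X 0 + C c₂ * X 1, C d₀ + C d₁ * X 0 + C d₂ * X 1)
        + rotMul (C a * X 0 + C b * X 1)) : v ∈ NedelecTri2 := by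
  refine Submodule.mem_sup.mpr ⟨_, ⟨?_, ?_⟩, _,
    Submodule.mem_map_of_mem (NT2.homog_lin a b), hv.symm⟩
  · exact (mem_restrictTotalDegree _ _ _).mpr (NT2.deg_lin c₀ c₁ c₂)
  · exact (mem_restrictTotalDegree _ _ _).mpr (NT2.deg_lin d₀ d₁ d₂)

/-- The natural generators of `NedelecTri2`. -/
noncomputable def genNT : Fin 8 → Mv × Mv :=
  ![(1,0),(X 0,0),(X 1,0),(0,1),(0,X 0),(0,X 1), rotMul (X 0), rotMul (X 1)]

lemma NT2.ned_le_span : NedelecTri2 ≤ Submodule.span ℝ (Set.range genNT) := by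
  rw [NedelecTri2]
  refine sup_le ?_ ?_
  · rw [LinearMap.prod_eq_sup_map]
    refine sup_le ?_ ?_
    · refine (Submodule.map_mono NT2.rtd_le).trans ?_
      rw [Submodule.map_span]
      refine Submodule.span_le.mpr ?_
      rintro v hv
      simp only [Set.image_insert_eq, Set.image_singleton, LinearMap.inl_apply,
        Set.mem_insert_iff, Set.mem_singleton_iff] at hv
      rcases hv with h | h | h <;> subst h <;> apply Submodule.subset_span
      · exact ⟨0, rfl⟩
      · exact ⟨1, rfl⟩
      · exact ⟨2, rfl⟩
    · refine (Submodule.map_mono NT2.rtd_le).trans ?_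
      rw [Submodule.map_span]
      refine Submodule.span_le.mpr ?_
      rintro v hv
      simp only [Set.image_insert_eq, Set.image_singleton, LinearMap.inr_apply,
        Set.mem_insert_iff, Set.mem_singleton_iff] at hv
      rcases hv with h | h | h <;> subst h <;> apply Submodule.subset_span
      · exact ⟨3, rfl⟩
      · exact ⟨4, rfl⟩
      · exact ⟨5, rfl⟩
  · refine (Submodule.map_mono NT2.homog_le).trans ?_
    rw [Submodule.map_span]
    refine Submodule.span_le.mpr ?_
    rintro v hv
    simp only [Set.image_insert_eq, Set.image_singleton,
      Set.mem_insert_iff, Set.mem_singleton_iff] at hv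
    rcases hv with h | h <;> subst h <;> apply Submodule.subset_span
    · exact ⟨6, rfl⟩
    · exact ⟨7, rfl⟩

lemma NT2.fd : FiniteDimensional ℝ NedelecTri2 :=
  haveI : FiniteDimensional ℝ (Submodule.span ℝ (Set.range genNT)) :=
    FiniteDimensional.span_of_finite ℝ (Set.finite_range _)
  Submodule.finiteDimensional_of_le NT2.ned_le_span

lemma NT2.fr8 : Module.finrank ℝ NedelecTri2 ≤ 8 := by
  classical
  haveI : FiniteDimensional ℝ (Submodule.span ℝ (Set.range genNT)) :=
    FiniteDimensional.span_of_finite ℝ (Set.finite_range _)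
  refine (Submodule.finrank_mono NT2.ned_le_span).trans ?_
  refine (finrank_span_le_card _).trans ?_
  rw [Set.toFinset_range]
  exact (Finset.card_image_le).trans (by simp)

theorem NT2_basis :
    (∀ j, shapeNT2 j ∈ NedelecTri2) ∧
    LinearIndependent ℝ shapeNT2 ∧
    Submodule.span ℝ (Set.range shapeNT2) = NedelecTri2 ∧
    Module.finrank ℝ NedelecTri2 = 8 := by
  have hmem : ∀ j, shapeNT2 j ∈ NedelecTri2 := by
    have m0 : ((2 * (-(X 1) + 4 * X 1 * X 0), 2 * (2 * X 0 - 4 * X 0 ^ 2)) : Mv × Mv)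
        ∈ NedelecTri2 := by
      refine NT2.mem_ned 0 0 (-2) 0 4 0 (-8) 0 _ ?_
      simp only [NT2.rotMul_apply, Prod.mk_add_mk, Prod.mk.injEq, map_neg, map_ofNat, map_zero]
      constructor <;> ring
    have m1 : ((2 * (-(2 : Mv) * X 1 + 4 * X 1 ^ 2), 2 * (X 0 - 4 * X 1 * X 0)) : Mv × Mv)
        ∈ NedelecTri2 := by
      refine NT2.mem_ned 0 0 (-4) 0 2 0 0 (-8) _ ?_
      simp only [NT2.rotMul_apply, Prod.mk_add_mk, Prod.mk.injEq, map_neg, map_ofNat, map_zero]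
      constructor <;> ring
    have m2 : ((2 * (-(2 : Mv) * X 1 + 4 * X 1 ^ 2),
        2 * (-(1 : Mv) + 3 * X 1 + X 0 - 4 * X 1 * X 0)) : Mv × Mv) ∈ NedelecTri2 := by
      refine NT2.mem_ned 0 0 (-4) (-2) 2 6 0 (-8) _ ?_
      simp only [NT2.rotMul_apply, Prod.mk_add_mk, Prod.mk.injEq, map_neg, map_ofNat, map_zero]
      constructor <;> ring
    have m3 : ((2 * (3 * X 1 - 4 * X 1 ^ 2 - 4 * X 1 * X 0),
        2 * ((2 : Mv) - 3 * X 1 - 6 * X 0 + 4 * X 1 * X 0 + 4 * X 0 ^ 2)) : Mv × Mv)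
        ∈ NedelecTri2 := by
      refine NT2.mem_ned 0 0 6 4 (-12) (-6) 8 8 _ ?_
      simp only [NT2.rotMul_apply, Prod.mk_add_mk, Prod.mk.injEq, map_neg, map_ofNat, map_zero]
      constructor <;> ring
    have m4 : ((2 * ((2 : Mv) - 6 * X 1 + 4 * X 1 ^ 2 - 3 * X 0 + 4 * X 1 * X 0),
        2 * (3 * X 0 - 4 * X 1 * X 0 - 4 * X 0 ^ 2)) : Mv × Mv) ∈ NedelecTri2 := by
      refine NT2.mem_ned 4 (-6) (-12) 0 6 0 (-8) (-8) _ ?_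
      simp only [NT2.rotMul_apply, Prod.mk_add_mk, Prod.mk.injEq, map_neg, map_ofNat, map_zero]
      constructor <;> ring
    have m5 : ((2 * (-(1 : Mv) + X 1 + 3 * X 0 - 4 * X 1 * X 0),
        2 * (-(2 : Mv) * X 0 + 4 * X 0 ^ 2)) : Mv × Mv) ∈ NedelecTri2 := by
      refine NT2.mem_ned (-2) 6 2 0 (-4) 0 8 0 _ ?_
      simp only [NT2.rotMul_apply, Prod.mk_add_mk, Prod.mk.injEq, map_neg, map_ofNat, map_zero]
      constructor <;> ring
    have m6 : ((2 * (8 * X 1 - 8 * X 1 ^ 2 - 4 * X 1 * X 0),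
        2 * (-(4 : Mv) * X 0 + 8 * X 1 * X 0 + 4 * X 0 ^ 2)) : Mv × Mv) ∈ NedelecTri2 := by
      refine NT2.mem_ned 0 0 16 0 (-8) 0 8 16 _ ?_
      simp only [NT2.rotMul_apply, Prod.mk_add_mk, Prod.mk.injEq, map_neg, map_ofNat, map_zero]
      constructor <;> ring
    have m7 : ((2 * (-(4 : Mv) * X 1 + 4 * X 1 ^ 2 + 8 * X 1 * X 0),
        2 * (8 * X 0 - 4 * X 1 * X 0 - 8 * X 0 ^ 2)) : Mv × Mv) ∈ NedelecTri2 := by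
      refine NT2.mem_ned 0 0 (-8) 0 16 0 (-16) (-8) _ ?_
      simp only [NT2.rotMul_apply, Prod.mk_add_mk, Prod.mk.injEq, map_neg, map_ofNat, map_zero]
      constructor <;> ring
    intro j
    fin_cases j
    · exact m0
    · exact m1
    · exact m2
    · exact m3
    · exact m4
    · exact m5
    · exact m6
    · exact m7
  have hind : LinearIndependent ℝ shapeNT2 := by
    rw [Fintype.linearIndependent_iff]
    intro g hg
    have key : ∀ (pt : Fin 2 → ℝ),
        (∑ j, g j * eval pt (shapeNT2 j).1 = 0) ∧
        (∑ j, g j * eval pt (shapeNT2 j).2 = 0) := by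
      intro pt
      constructor
      · have := congrArg (fun v : Mv × Mv => eval pt v.1) hg
        simpa [Prod.fst_sum, map_sum, smul_eval] using this
      · have := congrArg (fun v : Mv × Mv => eval pt v.2) hg
        simpa [Prod.snd_sum, map_sum, smul_eval] using this
    have e1 := (key ![0,0]).1
    have e2 := (key ![1,0]).1
    have e3 := (key ![0,1]).1
    have e4 := (key ![1,1]).1
    have e5 := (key ![0,0]).2
    have e6 := (key ![1,0]).2
    have e7 := (key ![0,1]).2
    have e8 := (key ![1,1]).2
    simp only [shapeNT2, Fin.sum_univ_eight, map_add,
      map_sub, map_mul, map_neg, map_ofNat, map_pow, eval_X,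
      Matrix.cons_val_zero, Matrix.cons_val_one, Matrix.head_cons] at e1 e2 e3 e4 e5 e6 e7 e8
    norm_num at e1 e2 e3 e4 e5 e6 e7 e8
    have h0 : g 0 = 0 := by linarith
    have h1 : g 1 = 0 := by linarith
    have h2 : g 2 = 0 := by linarith
    have h3 : g 3 = 0 := by linarith
    have h4 : g 4 = 0 := by linarith
    have h5 : g 5 = 0 := by linarith
    have h6 : g 6 = 0 := by linarith
    have h7 : g 7 = 0 := by linarith
    intro j
    fin_cases j <;> assumption
  have hle : Submodule.span ℝ (Set.range shapeNT2) ≤ NedelecTri2 :=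
    Submodule.span_le.mpr (Set.range_subset_iff.mpr hmem)
  haveI := NT2.fd
  have hcard : Module.finrank ℝ (Submodule.span ℝ (Set.range shapeNT2)) = 8 := by
    simpa using finrank_span_eq_card hind
  have heq : Submodule.span ℝ (Set.range shapeNT2) = NedelecTri2 :=
    Submodule.eq_of_le_of_finrank_le hle (by rw [hcard]; exact NT2.fr8)
  refine ⟨hmem, hind, heq, ?_⟩
  rw [← heq, hcard]
end
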